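/- arXiv:0704.0402 — 2 statements merged into one kernel-verified Lean document; each statement's English description precedes it below -/
import Mathlib

section
/- Let 2 ≤ m < N be real numbers and let f : ℝ → ℝ be continuous with f(t) = 0 for t ≤ 0, and suppose there exist constants C > 0, δ > 0, t₀ > 0 such that 0 ≤ f(t) ≤ C·t^(m−1+δ) for all 0 < t ≤ t₀. Let w : (0,∞) → ℝ be continuously differentiable with w(r) > 0 and w′(r) < 0 for all r > 0 and w(r) → 0 as r → ∞, and suppose that for every r > 0 the function ρ ↦ ρ^(N−1)·|w′(ρ)|^(m−2)·w′(ρ) is differentiable at r with derivative equal to r^(N−1)·(w(r)^(m−1) − f(w(r))). Then lim_{r→∞} w′(r)/w(r) = −(1/(m−1))^(1/m). -/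
open Real Filter Topology Set

/-- Invariance + linear growth lemma: if `y r1 ≥ a` and the derivative is at least `c > 0`
whenever `y ≥ a` (for `r ≥ r1`), then `y` stays `≥ a` and grows at rate `c`. -/
lemma grow_aux (y y' : ℝ → ℝ) (r1 a c : ℝ) (hc : 0 < c)
    (hd : ∀ r, r1 ≤ r → HasDerivAt y (y' r) r)
    (hy1 : a ≤ y r1)
    (hcond : ∀ r, r1 ≤ r → a ≤ y r → c ≤ y' r) :
    ∀ r, r1 ≤ r → y r1 + c * (r - r1) ≤ y r := by
  -- Step 1: invariance
  have inv : ∀ r, r1 ≤ r → a ≤ y r := by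
    by_contra h
    push_neg at h
    obtain ⟨rb, hrb1, hrb⟩ := h
    set S : Set ℝ := {r | r1 ≤ r ∧ y r < a} with hS
    have hne : S.Nonempty := ⟨rb, hrb1, hrb⟩
    have hbdd : BddBelow S := ⟨r1, fun x hx => hx.1⟩
    set T := sInf S with hT
    have hT1 : r1 ≤ T := le_csInf hne (fun x hx => hx.1)
    have hbefore : ∀ r, r1 ≤ r → r < T → a ≤ y r := by
      intro r hr1 hrT
      by_contra hya
      push_neg at hya
      exact absurd (csInf_le hbdd ⟨hr1, hya⟩) (not_le.2 hrT)
    have hyT : a ≤ y T := by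
      rcases eq_or_lt_of_le hT1 with h | h
      · rwa [← h]
      · have hcont : ContinuousAt y T := (hd T hT1).continuousAt
        have htend : Tendsto y (𝓝[<] T) (𝓝 (y T)) :=
          hcont.continuousWithinAt.tendsto
        refine ge_of_tendsto htend ?_
        filter_upwards [Ioo_mem_nhdsLT_of_mem ⟨h, le_refl T⟩] with s hs
        exact hbefore s hs.1.le hs.2
    have hyT' : c ≤ y' T := hcond T hT1 hyT
    -- near-right of T, y > y T ≥ a
    have hslope : Tendsto (slope y T) (𝓝[≠] T) (𝓝 (y' T)) :=
      hasDerivAt_iff_tendsto_slope.1 (hd T hT1)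
    have hpos : ∀ᶠ s in 𝓝[≠] T, 0 < slope y T s :=
      hslope.eventually (eventually_gt_nhds (lt_of_lt_of_le hc hyT'))
    have hpos' : ∀ᶠ s in 𝓝[>] T, 0 < slope y T s :=
      hpos.filter_mono (nhdsWithin_mono T (fun x hx => ne_of_gt hx))
    obtain ⟨u, hu, hU⟩ := mem_nhdsGT_iff_exists_Ioo_subset.1 hpos'
    -- there is a point of S in (T, u)
    have : ∃ s ∈ S, s < min u (T + 1) := by
      have h1 : T < min u (T+1) := lt_min hu (by linarith)
      obtain ⟨s, hsS, hs⟩ := (csInf_lt_iff hbdd hne).1 h1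
      exact ⟨s, hsS, hs⟩
    obtain ⟨s, hsS, hsu⟩ := this
    have hTs : T ≤ s := csInf_le hbdd hsS
    have hTs' : T < s := by
      rcases eq_or_lt_of_le hTs with h | h
      · exfalso; rw [← h] at hsS; exact absurd hyT (not_le.2 hsS.2)
      · exact h
    have hsIoo : s ∈ Ioo T u := ⟨hTs', lt_of_lt_of_le hsu (min_le_left _ _)⟩
    have h2 : 0 < slope y T s := hU hsIoo
    rw [slope_def_field] at h2
    have h3 : 0 < s - T := by linarith
    have hys : y T < y s := by
      nlinarith [mul_pos h2 h3, div_mul_cancel₀ (y s - y T) (ne_of_gt h3)]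
    have := hsS.2
    linarith [hyT]
  -- Step 2: growth via monotonicity of z = y - c * r
  intro r hr
  rcases eq_or_lt_of_le hr with h | h
  · rw [← h]; simp
  have hmono : MonotoneOn (fun s => y s - c * s) (Icc r1 r) := by
    have hds : ∀ s ∈ interior (Icc r1 r), HasDerivAt (fun s => y s - c * s) (y' s - c) s := by
      intro s hs
      rw [interior_Icc] at hs
      have h := (hd s hs.1.le).sub ((hasDerivAt_id s).const_mul c)
      rw [mul_one] at h
      exact h
    apply monotoneOn_of_deriv_nonneg (convex_Icc r1 r)
    · apply ContinuousOn.sub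
      · exact fun s hs => ((hd s hs.1).continuousAt).continuousWithinAt
      · exact (continuous_const.mul continuous_id).continuousOn
    · exact fun s hs => ((hds s hs).differentiableAt).differentiableWithinAt
    · intro s hs
      rw [(hds s hs).deriv]
      rw [interior_Icc] at hs
      have := hcond s hs.1.le (inv s hs.1.le)
      linarith
  have := hmono ⟨le_refl r1, hr⟩ ⟨hr, le_refl r⟩ hr
  simp only at this
  linarith


lemma deriv_y (m N : ℝ) (hm : 2 ≤ m) (hmN : m < N)
    (f : ℝ → ℝ) (w w' : ℝ → ℝ)
    (hw_deriv : ∀ r > (0:ℝ), HasDerivAt w (w' r) r)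
    (hw_pos : ∀ r > (0:ℝ), 0 < w r)
    (hw'_neg : ∀ r > (0:ℝ), w' r < 0)
    (hODE : ∀ r > (0:ℝ),
      HasDerivAt (fun ρ : ℝ => ρ ^ (N - 1) * |w' ρ| ^ (m - 2) * w' ρ)
        (r ^ (N - 1) * ((w r) ^ (m - 1) - f (w r))) r)
    (r : ℝ) (hr : 0 < r) :
    HasDerivAt (fun ρ => (-w' ρ / w ρ) ^ (m - 1))
      ((m - 1) * ((-w' r / w r) ^ (m - 1)) ^ (m / (m - 1)) - 1 + f (w r) / (w r) ^ (m - 1)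
        - (N - 1) * (-w' r / w r) ^ (m - 1) / r) r := by
  have hIoi : Ioi (0:ℝ) ∈ 𝓝 r := Ioi_mem_nhds hr
  have ha : 0 < w r := hw_pos r hr
  have hb : 0 < -w' r := by linarith [hw'_neg r hr]
  have hs : 0 < r ^ (N - 1) := rpow_pos_of_pos hr _
  have hA : 0 < (w r) ^ (m - 1) := rpow_pos_of_pos ha _
  have hB : 0 < (-w' r) ^ (m - 1) := rpow_pos_of_pos hb _
  set q : ℝ → ℝ := fun ρ => (-w' ρ) ^ (m - 1) with hq_def
  set W : ℝ → ℝ := fun ρ => (w ρ) ^ (m - 1) with hW_def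
  -- derivative of ρ ↦ ρ^(N-1) * q ρ
  have hgq : HasDerivAt (fun ρ => ρ ^ (N - 1) * q ρ)
      (-(r ^ (N - 1) * ((w r) ^ (m - 1) - f (w r)))) r := by
    refine HasDerivAt.congr_of_eventuallyEq ((hODE r hr).neg) ?_
    filter_upwards [hIoi] with ρ hρ
    have hbρ : 0 < -w' ρ := by linarith [hw'_neg ρ hρ]
    have habs : |w' ρ| = -w' ρ := abs_of_neg (hw'_neg ρ hρ)
    have hsplit : (-w' ρ) ^ (m - 1) = (-w' ρ) ^ (m - 2) * (-w' ρ) := by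
      rw [show m - 1 = (m - 2) + 1 by ring, rpow_add hbρ, rpow_one]
    simp only [hq_def, habs, hsplit, Pi.neg_apply]
    ring
  -- derivative of q
  have hrne : (r : ℝ) ≠ 0 := hr.ne'
  have hsne : r ^ (N - 1) ≠ 0 := hs.ne'
  have hrpow : HasDerivAt (fun ρ : ℝ => ρ ^ (N - 1)) ((N - 1) * r ^ (N - 1 - 1)) r :=
    Real.hasDerivAt_rpow_const (Or.inl hrne)
  have hq : HasDerivAt q
      (-((w r) ^ (m - 1) - f (w r)) - (N - 1) * ((-w' r) ^ (m - 1)) / r) r := by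
    have hdiv := hgq.div hrpow hsne
    have heq : q =ᶠ[𝓝 r] fun ρ => (ρ ^ (N - 1) * q ρ) / ρ ^ (N - 1) := by
      filter_upwards [hIoi] with ρ hρ
      have : (ρ:ℝ) ^ (N - 1) ≠ 0 := (rpow_pos_of_pos hρ _).ne'
      field_simp
    have h2 := HasDerivAt.congr_of_eventuallyEq hdiv heq
    refine h2.congr_deriv ?_
    have hpow2 : r ^ (N - 1 - 1) = r ^ (N - 1) / r := by
      rw [rpow_sub hr, rpow_one]
    rw [hpow2]
    field_simp
    ring
  -- derivative of W and combining
  have hm1 : m - 1 ≠ 0 := by linarith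
  have ht : 0 < -w' r / w r := div_pos hb ha
  have heq2 : (fun ρ => (-w' ρ / w ρ) ^ (m - 1)) =ᶠ[𝓝 r] fun ρ => q ρ / W ρ := by
    filter_upwards [hIoi] with ρ hρ
    have hbρ : (0:ℝ) ≤ -w' ρ := by linarith [hw'_neg ρ hρ]
    exact Real.div_rpow hbρ (hw_pos ρ hρ).le _
  have hWd : HasDerivAt W (w' r * (m - 1) * (w r) ^ (m - 1 - 1)) r :=
    (hw_deriv r hr).rpow_const (Or.inl ha.ne')
  have hy := (hq.div hWd hA.ne').congr_of_eventuallyEq heq2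
  refine hy.congr_deriv ?_
  have h1 : (-w' r / w r) ^ (m - 1) = (-w' r) ^ (m - 1) / (w r) ^ (m - 1) :=
    Real.div_rpow hb.le ha.le _
  have h2 : ((-w' r / w r) ^ (m - 1)) ^ (m / (m - 1))
      = (-w' r / w r) ^ (m - 1) * (-w' r / w r) := by
    rw [← Real.rpow_mul ht.le, show (m - 1) * (m / (m - 1)) = (m - 1) + 1 by
      field_simp; ring, Real.rpow_add ht, Real.rpow_one]
  simp only [hq_def, hW_def]
  rw [h2, h1, show (w r) ^ (m - 1 - 1) = (w r) ^ (m - 1) / w r by rw [rpow_sub ha, rpow_one]]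
  field_simp
  ring


set_option maxHeartbeats 1000000 in
/-- Proposition 1(ii), decay of the logarithmic derivative of a radial ground state of
`Δ_m w - w^(m-1) + f(w) = 0` in `ℝ^N`. -/
theorem stmt_0 (m N : ℝ) (hm : 2 ≤ m) (hmN : m < N)
    (f : ℝ → ℝ) (hf_cont : Continuous f) (hf_zero : ∀ t ≤ (0:ℝ), f t = 0)
    (C δ t₀ : ℝ) (hC : 0 < C) (hδ : 0 < δ) (ht₀ : 0 < t₀)
    (hf_bound : ∀ t : ℝ, 0 < t → t ≤ t₀ → 0 ≤ f t ∧ f t ≤ C * t ^ (m - 1 + δ))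
    (w w' : ℝ → ℝ)
    (hw_deriv : ∀ r > (0:ℝ), HasDerivAt w (w' r) r)
    (hw'_cont : ContinuousOn w' (Ioi 0))
    (hw_pos : ∀ r > (0:ℝ), 0 < w r)
    (hw'_neg : ∀ r > (0:ℝ), w' r < 0)
    (hw_lim : Tendsto w atTop (𝓝 0))
    (hODE : ∀ r > (0:ℝ),
      HasDerivAt (fun ρ : ℝ => ρ ^ (N - 1) * |w' ρ| ^ (m - 2) * w' ρ)
        (r ^ (N - 1) * ((w r) ^ (m - 1) - f (w r))) r) :
    Tendsto (fun r => w' r / w r) atTop (𝓝 (-(1 / (m - 1)) ^ (1 / m))) := by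
  have hk : (0:ℝ) < m - 1 := by linarith
  have hkne : m - 1 ≠ 0 := hk.ne'
  have hN1 : (0:ℝ) < N - 1 := by linarith
  set P : ℝ := m / (m - 1) with hP_def
  have hP1 : 1 < P := (one_lt_div hk).2 (by linarith)
  have hP0 : 0 < P := by linarith
  set Y : ℝ → ℝ := fun r => (-w' r / w r) ^ (m - 1) with hY_def
  set E : ℝ → ℝ := fun r =>
    (m - 1) * (Y r) ^ P - 1 + f (w r) / (w r) ^ (m - 1) - (N - 1) * Y r / r with hE_def
  have hYd : ∀ r > (0:ℝ), HasDerivAt Y (E r) r := fun r hr =>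
    deriv_y m N hm hmN f w w' hw_deriv hw_pos hw'_neg hODE r hr
  have hYpos : ∀ r > (0:ℝ), 0 < Y r := fun r hr =>
    rpow_pos_of_pos (div_pos (by linarith [hw'_neg r hr]) (hw_pos r hr)) _
  set ystar : ℝ := ((m - 1)⁻¹) ^ ((m - 1) / m) with hystar_def
  have hinv_pos : (0:ℝ) < (m - 1)⁻¹ := inv_pos.2 hk
  have hystar_pos : 0 < ystar := rpow_pos_of_pos hinv_pos _
  have hystar_pow : ystar ^ P = (m - 1)⁻¹ := by
    rw [hystar_def, ← Real.rpow_mul hinv_pos.le,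
      show (m - 1) / m * P = 1 by rw [hP_def]; field_simp, Real.rpow_one]
  -- epsilon bound
  have heps : ∀ e > (0:ℝ), ∀ᶠ r in atTop,
      0 ≤ f (w r) / (w r) ^ (m - 1) ∧ f (w r) / (w r) ^ (m - 1) ≤ e := by
    intro e he
    have hθ : (0:ℝ) < min t₀ ((e / C) ^ δ⁻¹) :=
      lt_min ht₀ (rpow_pos_of_pos (div_pos he hC) _)
    filter_upwards [hw_lim.eventually (eventually_lt_nhds hθ), eventually_gt_atTop (0:ℝ)]
      with r hwr hr
    have ha : 0 < w r := hw_pos r hr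
    have hA : 0 < (w r) ^ (m - 1) := rpow_pos_of_pos ha _
    obtain ⟨hf0, hfle⟩ := hf_bound (w r) ha (le_of_lt (lt_of_lt_of_le hwr (min_le_left _ _)))
    constructor
    · exact div_nonneg hf0 hA.le
    · rw [div_le_iff₀ hA]
      calc f (w r) ≤ C * (w r) ^ (m - 1 + δ) := hfle
        _ = C * (w r) ^ δ * (w r) ^ (m - 1) := by
            rw [show m - 1 + δ = δ + (m-1) by ring, rpow_add ha]; ring
        _ ≤ e * (w r) ^ (m - 1) := by
            have h1 : (w r) ^ δ ≤ ((e / C) ^ δ⁻¹) ^ δ :=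
              rpow_le_rpow ha.le (le_of_lt (lt_of_lt_of_le hwr (min_le_right _ _))) hδ.le
            rw [Real.rpow_inv_rpow (div_pos he hC).le hδ.ne'] at h1
            have : C * (w r) ^ δ ≤ C * (e / C) := by
              exact mul_le_mul_of_nonneg_left h1 hC.le
            rw [mul_div_cancel₀ e hC.ne'] at this
            exact mul_le_mul_of_nonneg_right this hA.le
  -- lower bound
  have hlow : ∀ a < ystar, ∀ᶠ r in atTop, a < Y r := by
    intro a ha
    rcases le_or_gt a 0 with ha0 | ha0
    · filter_upwards [eventually_gt_atTop (0:ℝ)] with r hr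
      exact lt_of_le_of_lt ha0 (hYpos r hr)
    · set c' : ℝ := (1 - (m - 1) * a ^ P) / 2 with hc'_def
      have hapP : a ^ P < (m - 1)⁻¹ := by
        rw [← hystar_pow]; exact rpow_lt_rpow ha0.le ha hP0
      have hc' : 0 < c' := by
        rw [hc'_def]
        have : (m - 1) * a ^ P < (m - 1) * (m - 1)⁻¹ := by
          exact mul_lt_mul_of_pos_left hapP hk
        rw [mul_inv_cancel₀ hkne] at this
        linarith
      obtain ⟨R₀, hR₀⟩ := eventually_atTop.1 ((heps c' hc').and (eventually_gt_atTop (0:ℝ)))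
      filter_upwards [eventually_ge_atTop R₀] with r1 hr1
      by_contra hY1
      push_neg at hY1
      have hr1pos : 0 < r1 := (hR₀ r1 hr1).2
      have hgrow := grow_aux (fun r => -Y r) (fun r => -E r) r1 (-a) c' hc'
        (fun r hr => (hYd r (lt_of_lt_of_le hr1pos hr)).neg)
        (by linarith)
        (by
          intro r hr hYa
          have hrpos : 0 < r := lt_of_lt_of_le hr1pos hr
          have hYa' : Y r ≤ a := by linarith
          have h1 : (Y r) ^ P ≤ a ^ P := rpow_le_rpow (hYpos r hrpos).le hYa' hP0.le
          have h2 := (hR₀ r (le_trans hr1 hr)).1.2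
          have h3 : 0 ≤ (N - 1) * Y r / r :=
            div_nonneg (mul_nonneg hN1.le (hYpos r hrpos).le) hrpos.le
          have : E r ≤ -c' := by
            rw [hE_def]
            have h4 : (m-1) * (Y r) ^ P ≤ (m-1) * a ^ P := mul_le_mul_of_nonneg_left h1 hk.le
            simp only
            rw [hc'_def] at *
            linarith
          show c' ≤ -E r
          linarith)
      set r2 := r1 + (a + 1) / c' with hr2_def
      have hr2 : r1 ≤ r2 := by
        rw [hr2_def]; nlinarith [div_nonneg (by linarith : (0:ℝ) ≤ a + 1) hc'.le]
      have hg := hgrow r2 hr2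
      have hmul : c' * (r2 - r1) = a + 1 := by
        rw [hr2_def]; field_simp; ring
      have hr2pos : 0 < r2 := lt_of_lt_of_le hr1pos hr2
      have hpos2 := hYpos r2 hr2pos
      linarith
  -- upper bound
  have hupp : ∀ b > ystar, ∀ᶠ r in atTop, Y r < b := by
    intro b hb
    set a' : ℝ := (ystar + b) / 2 with ha'_def
    have ha'1 : ystar < a' := by rw [ha'_def]; linarith
    have ha'2 : a' < b := by rw [ha'_def]; linarith
    have ha'pos : 0 < a' := lt_trans hystar_pos ha'1
    set c : ℝ := ((m - 1) * a' ^ P - 1) / 2 with hc_def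
    have hc : 0 < c := by
      have h1 : (m - 1)⁻¹ < a' ^ P := by
        rw [← hystar_pow]; exact rpow_lt_rpow hystar_pos.le ha'1 hP0
      have : (m - 1) * (m - 1)⁻¹ < (m - 1) * a' ^ P := mul_lt_mul_of_pos_left h1 hk
      rw [mul_inv_cancel₀ hkne] at this
      rw [hc_def]; linarith
    set Y0 : ℝ := max (max a' ((4 / (m - 1)) ^ P⁻¹)) ((2 * (N - 1) / (m - 1)) ^ (P - 1)⁻¹)
      with hY0_def
    have hY0a' : a' ≤ Y0 := le_trans (le_max_left _ _) (le_max_left _ _)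
    have hY0pos : 0 < Y0 := lt_of_lt_of_le ha'pos hY0a'
    -- facts for y ≥ Y0
    have hfact : ∀ y : ℝ, Y0 ≤ y →
        1 ≤ (m - 1) / 4 * y ^ P ∧ (N - 1) * y ≤ (m - 1) / 2 * y ^ P := by
      intro y hy
      have hypos : 0 < y := lt_of_lt_of_le hY0pos hy
      constructor
      · have h1 : (4 / (m - 1)) ^ P⁻¹ ≤ y :=
          le_trans (le_trans (le_max_right _ _) (le_max_left _ _)) hy
        have h2 : ((4 / (m - 1)) ^ P⁻¹) ^ P ≤ y ^ P :=
          rpow_le_rpow (rpow_nonneg (by positivity) _) h1 hP0.le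
        rw [Real.rpow_inv_rpow (by positivity) hP0.ne'] at h2
        have h3 : (m - 1) / 4 * (4 / (m - 1)) ≤ (m - 1) / 4 * y ^ P :=
          mul_le_mul_of_nonneg_left h2 (by positivity)
        rw [show (m - 1) / 4 * (4 / (m - 1)) = 1 by field_simp] at h3
        exact h3
      · have hP1' : (0:ℝ) < P - 1 := by linarith
        have h1 : (2 * (N - 1) / (m - 1)) ^ (P - 1)⁻¹ ≤ y := le_trans (le_max_right _ _) hy
        have h2 : ((2 * (N - 1) / (m - 1)) ^ (P - 1)⁻¹) ^ (P - 1) ≤ y ^ (P - 1) :=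
          rpow_le_rpow (rpow_nonneg (by positivity) _) h1 hP1'.le
        rw [Real.rpow_inv_rpow (by positivity) hP1'.ne'] at h2
        have h3 : y ^ P = y ^ (P - 1) * y := by
          have h3a := Real.rpow_add hypos (P - 1) 1
          rw [rpow_one, sub_add_cancel] at h3a
          exact h3a
        rw [h3]
        have h4 : (m - 1) / 2 * (2 * (N - 1) / (m - 1)) ≤ (m - 1) / 2 * y ^ (P - 1) :=
          mul_le_mul_of_nonneg_left h2 (by positivity)
        rw [show (m - 1) / 2 * (2 * (N - 1) / (m - 1)) = N - 1 by field_simp] at h4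
        nlinarith
    set c2 : ℝ := min c ((m - 1) / 4 * Y0 ^ P) with hc2_def
    have hc2 : 0 < c2 := lt_min hc (by positivity)
    obtain ⟨R₀, hR₀⟩ := eventually_atTop.1
      (((heps 1 one_pos).and (eventually_ge_atTop (1:ℝ))).and
        (eventually_ge_atTop ((N - 1) * Y0 / c)))
    -- main branch estimate
    have hbranch : ∀ r, R₀ ≤ r → Y0 ≤ Y r → (m - 1) / 4 * (Y r) ^ P ≤ E r := by
      intro r hr hY0r
      obtain ⟨⟨⟨heps0, _⟩, hr1⟩, _⟩ := hR₀ r hr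
      have hrpos : (0:ℝ) < r := by linarith
      obtain ⟨hf1, hf2⟩ := hfact (Y r) hY0r
      have hYrpos : 0 < Y r := hYpos r hrpos
      have h5 : (N - 1) * Y r / r ≤ (N - 1) * Y r := by
        rw [div_le_iff₀ hrpos]
        nlinarith [mul_nonneg hN1.le hYrpos.le]
      rw [hE_def]; simp only
      linarith
    have hcondU : ∀ r, R₀ ≤ r → a' ≤ Y r → c2 ≤ E r := by
      intro r hr hY0r
      obtain ⟨⟨⟨heps0, _⟩, hr1⟩, hrR⟩ := hR₀ r hr
      have hrpos : (0:ℝ) < r := by linarith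
      rcases le_or_gt (Y r) Y0 with hcase | hcase
      · have h1 : a' ^ P ≤ (Y r) ^ P := rpow_le_rpow ha'pos.le hY0r hP0.le
        have h2 : (N - 1) * Y r / r ≤ c := by
          rw [div_le_iff₀ hrpos]
          have h2a : (N - 1) * Y0 ≤ r * c := (div_le_iff₀ hc).1 hrR
          nlinarith [hYpos r hrpos, hcase, hN1]
        rw [hE_def]; simp only
        have h4 : (m-1) * a' ^ P ≤ (m-1) * (Y r) ^ P := mul_le_mul_of_nonneg_left h1 hk.le
        have : c2 ≤ c := min_le_left _ _
        rw [hc_def] at *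
        linarith
      · have := hbranch r hr hcase.le
        have h1 : Y0 ^ P ≤ (Y r) ^ P := rpow_le_rpow hY0pos.le hcase.le hP0.le
        have h2 : c2 ≤ (m - 1) / 4 * Y0 ^ P := min_le_right _ _
        have h3 : (m - 1) / 4 * Y0 ^ P ≤ (m - 1) / 4 * (Y r) ^ P :=
          mul_le_mul_of_nonneg_left h1 (by positivity)
        exact le_trans (le_trans h2 h3) this
    filter_upwards [eventually_ge_atTop R₀] with r1 hr1
    by_contra hY1
    push_neg at hY1
    have hr1pos : 0 < r1 := by
      obtain ⟨⟨_, h1⟩, _⟩ := hR₀ r1 hr1; linarith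
    -- stage 1: linear growth to Y0
    have hgrow1 := grow_aux Y E r1 a' c2 hc2
      (fun r hr => hYd r (lt_of_lt_of_le hr1pos hr))
      (le_trans ha'2.le hY1)
      (fun r hr => hcondU r (le_trans hr1 hr))
    set r2 : ℝ := r1 + (|Y0| + |Y r1|) / c2 with hr2_def
    have hr2ge : r1 ≤ r2 := by
      rw [hr2_def]
      have : 0 ≤ (|Y0| + |Y r1|) / c2 := by positivity
      linarith
    have hYr2 : Y0 ≤ Y r2 := by
      have := hgrow1 r2 hr2ge
      have hmul : c2 * (r2 - r1) = |Y0| + |Y r1| := by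
        rw [hr2_def]; field_simp; ring
      nlinarith [le_abs_self Y0, neg_abs_le (Y r1), le_abs_self (Y r1)]
    have hr2pos : 0 < r2 := lt_of_lt_of_le hr1pos hr2ge
    -- stage 2: invariance above Y0
    have hgrow2 := grow_aux Y E r2 Y0 ((m - 1) / 4 * Y0 ^ P) (by positivity)
      (fun r hr => hYd r (lt_of_lt_of_le hr2pos hr))
      hYr2
      (fun r hr hY0r => by
        have := hbranch r (le_trans (le_trans hr1 hr2ge) hr) hY0r
        have h1 : Y0 ^ P ≤ (Y r) ^ P := rpow_le_rpow hY0pos.le hY0r hP0.le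
        have h3 : (m - 1) / 4 * Y0 ^ P ≤ (m - 1) / 4 * (Y r) ^ P :=
          mul_le_mul_of_nonneg_left h1 (by positivity)
        linarith)
    have hinv2 : ∀ r, r2 ≤ r → Y0 ≤ Y r := by
      intro r hr
      have := hgrow2 r hr
      nlinarith [mul_nonneg (by positivity : (0:ℝ) ≤ (m-1)/4 * Y0 ^ P) (by linarith : (0:ℝ) ≤ r - r2)]
    -- stage 3: blow-up of u = Y^(1-P)
    set u : ℝ → ℝ := fun r => (Y r) ^ (1 - P) with hu_def
    have hupos : ∀ r > (0:ℝ), 0 < u r := fun r hr => rpow_pos_of_pos (hYpos r hr) _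
    set c4 : ℝ := (m - 1) / 4 * (P - 1) with hc4_def
    have hc4 : 0 < c4 := by
      have : (0:ℝ) < P - 1 := by linarith
      rw [hc4_def]; positivity
    have hgrow3 := grow_aux (fun r => -u r) (fun r => -(E r * (1 - P) * (Y r) ^ (1 - P - 1)))
      r2 (-u r2) c4 hc4
      (fun r hr => by
        exact ((hYd r (lt_of_lt_of_le hr2pos hr)).rpow_const
          (Or.inl (hYpos r (lt_of_lt_of_le hr2pos hr)).ne')).neg)
      le_rfl
      (fun r hr _ => by
        show c4 ≤ -(E r * (1 - P) * (Y r) ^ (1 - P - 1))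
        have hrpos : 0 < r := lt_of_lt_of_le hr2pos hr
        have hYrpos : 0 < Y r := hYpos r hrpos
        have hYY0 : Y0 ≤ Y r := hinv2 r hr
        have hE : (m - 1) / 4 * (Y r) ^ P ≤ E r :=
          hbranch r (le_trans (le_trans hr1 hr2ge) hr) hYY0
        have hpowrw : (Y r) ^ (1 - P - 1) = ((Y r) ^ P)⁻¹ := by
          rw [show (1:ℝ) - P - 1 = -P by ring, Real.rpow_neg hYrpos.le]
        rw [hpowrw]
        have hYP : 0 < (Y r) ^ P := rpow_pos_of_pos hYrpos _
        have key : c4 ≤ E r * (P - 1) * ((Y r) ^ P)⁻¹ := by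
          rw [hc4_def]
          have h1 : (m - 1) / 4 * (Y r) ^ P * (P - 1) * ((Y r) ^ P)⁻¹ ≤
              E r * (P - 1) * ((Y r) ^ P)⁻¹ := by
            apply mul_le_mul_of_nonneg_right _ (by positivity)
            exact mul_le_mul_of_nonneg_right hE (by linarith)
          calc (m - 1) / 4 * (P - 1)
              = (m - 1) / 4 * (Y r) ^ P * (P - 1) * ((Y r) ^ P)⁻¹ := by
                field_simp
            _ ≤ E r * (P - 1) * ((Y r) ^ P)⁻¹ := h1
        nlinarith [key]
      )
    set r3 : ℝ := r2 + (u r2 + 1) / c4 with hr3_def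
    have hur2 : 0 < u r2 := hupos r2 hr2pos
    have hr3ge : r2 ≤ r3 := by
      rw [hr3_def]
      have : 0 ≤ (u r2 + 1) / c4 := by positivity
      linarith
    have := hgrow3 r3 hr3ge
    have hmul : c4 * (r3 - r2) = u r2 + 1 := by rw [hr3_def]; field_simp; ring
    have hur3 : 0 < u r3 := hupos r3 (lt_of_lt_of_le hr2pos hr3ge)
    nlinarith
  -- conclusion
  have hY_lim : Tendsto Y atTop (𝓝 ystar) := tendsto_order.2 ⟨hlow, hupp⟩
  have htend : Tendsto (fun r => -(Y r) ^ (m - 1)⁻¹) atTop (𝓝 (-ystar ^ (m - 1)⁻¹)) :=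
    (hY_lim.rpow_const (Or.inl hystar_pos.ne')).neg
  have hval : -ystar ^ (m - 1)⁻¹ = -(1 / (m - 1)) ^ (1 / m) := by
    rw [hystar_def, ← Real.rpow_mul hinv_pos.le,
      show (m - 1) / m * (m - 1)⁻¹ = 1 / m by field_simp, one_div (m-1)]
  rw [← hval]
  apply htend.congr'
  filter_upwards [eventually_gt_atTop (0:ℝ)] with r hr
  have ha : 0 < w r := hw_pos r hr
  have hb : 0 < -w' r := by linarith [hw'_neg r hr]
  have ht : 0 ≤ -w' r / w r := (div_pos hb ha).le
  rw [hY_def]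
  simp only
  rw [Real.rpow_rpow_inv ht hkne]
  field_simp
end

section
/- Let m ≥ 2 and p be real numbers with m − 1 < p. Then the function g(u) = ((m−1)·u^(m−1) − p·u^p) / (u^(m−1) − u^p) is non-increasing on (1, ∞). -/
open Real Set

lemma key_rewrite (m p : ℝ) (hp : m - 1 < p) (u : ℝ) (hu : 1 < u) :
    ((m - 1) * u ^ (m - 1) - p * u ^ p) / (u ^ (m - 1) - u ^ p)
      = p + (p - (m - 1)) / (u ^ (p - (m - 1)) - 1) := by
  have hu0 : (0:ℝ) < u := by linarith
  have hs : 1 < u ^ (p - (m - 1)) :=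
    Real.one_lt_rpow_iff_of_pos hu0 |>.mpr (Or.inl ⟨hu, by linarith⟩)
  have hq : (0:ℝ) < u ^ (m - 1) := Real.rpow_pos_of_pos hu0 _
  have hsplit : u ^ p = u ^ (m - 1) * u ^ (p - (m - 1)) := by
    rw [← Real.rpow_add hu0]; ring_nf
  have h1 : u ^ (m - 1) - u ^ p ≠ 0 := by
    rw [hsplit]; nlinarith
  have h2 : u ^ (p - (m - 1)) - 1 ≠ 0 := by nlinarith
  field_simp
  rw [hsplit]; ring

/-- Remark 1: for `f(t) = t^p` with `m - 1 < p`, the function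
`g(u) = ((m-1) u^(m-1) - p u^p)/(u^(m-1) - u^p)` of hypothesis (H5) is non-increasing
on `(1, ∞)`. -/
theorem stmt_15 (m p : ℝ) (hm : 2 ≤ m) (hp : m - 1 < p) :
    AntitoneOn (fun u : ℝ => ((m - 1) * u ^ (m - 1) - p * u ^ p) / (u ^ (m - 1) - u ^ p))
      (Ioi 1) := by
  intro x hx y hy hxy
  simp only [mem_Ioi] at hx hy
  simp only []
  rw [key_rewrite m p hp x hx, key_rewrite m p hp y hy]
  have hx0 : (0:ℝ) < x := by linarith
  have hsx : 1 < x ^ (p - (m - 1)) :=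
    Real.one_lt_rpow_iff_of_pos hx0 |>.mpr (Or.inl ⟨hx, by linarith⟩)
  have hle : x ^ (p - (m - 1)) ≤ y ^ (p - (m - 1)) :=
    Real.rpow_le_rpow (le_of_lt hx0) hxy (by linarith)
  have : (p - (m - 1)) / (y ^ (p - (m - 1)) - 1) ≤ (p - (m - 1)) / (x ^ (p - (m - 1)) - 1) := by
    gcongr
  linarith
end
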